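/- There exists a constant C > 0 such that for every (x,t) ∈ ℝ^{n₁}×ℝⁿ with (x,t) ≠ (0,0), |∇_G N_α(x,t)| ≥ C ‖x‖^{4α−1} / N_α(x,t)^{4α−1}, where ‖x‖ is the Euclidean norm on ℝ^{n₁}. In particular, since ‖x‖ ≥ |x_{j₀}| for every j₀ ∈ {1,…,n₁}, the quasi-norm N_α satisfies Condition (G) with γ = 4α and any index j₀ ∈ {1,…,n₁}. -/

import Mathlib

open Real Finset Matrix MeasureTheory

/-- The generating vector fields `X_j` of a step-2 Carnot group on `ℝ^{n₁} × ℝⁿ` defined by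
skew-symmetric matrices `B⁽ᵏ⁾`:
`X_j f(x,t) = ∂_{x_j} f(x,t) + (1/2) Σ_k Σ_i B⁽ᵏ⁾_{ij} x_i ∂_{t_k} f(x,t)`. -/
noncomputable def Xvf {n₁ n : ℕ} (B : Fin n → Matrix (Fin n₁) (Fin n₁) ℝ) (j : Fin n₁)
    (f : (Fin n₁ → ℝ) × (Fin n → ℝ) → ℝ) (z : (Fin n₁ → ℝ) × (Fin n → ℝ)) : ℝ :=
  fderiv ℝ f z (Pi.single j 1, 0) +
    (1 / 2) * ∑ k : Fin n, (∑ i : Fin n₁, B k i j * z.1 i) * fderiv ℝ f z (0, Pi.single k 1)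

/-- The squared length of the sub-gradient: `|∇_G f|² = Σ_j (X_j f)²`. -/
noncomputable def gradSq {n₁ n : ℕ} (B : Fin n → Matrix (Fin n₁) (Fin n₁) ℝ)
    (f : (Fin n₁ → ℝ) × (Fin n → ℝ) → ℝ) (z : (Fin n₁ → ℝ) × (Fin n → ℝ)) : ℝ :=
  ∑ j : Fin n₁, (Xvf B j f z) ^ 2

/-- The length `|∇_G f|` of the sub-gradient. -/
noncomputable def gradLen {n₁ n : ℕ} (B : Fin n → Matrix (Fin n₁) (Fin n₁) ℝ)
    (f : (Fin n₁ → ℝ) × (Fin n → ℝ) → ℝ) (z : (Fin n₁ → ℝ) × (Fin n → ℝ)) : ℝ :=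
  Real.sqrt (gradSq B f z)

/-- The sub-Laplacian `Δ_G f = Σ_j X_j (X_j f)`. -/
noncomputable def subLap {n₁ n : ℕ} (B : Fin n → Matrix (Fin n₁) (Fin n₁) ℝ)
    (f : (Fin n₁ → ℝ) × (Fin n → ℝ) → ℝ) (z : (Fin n₁ → ℝ) × (Fin n → ℝ)) : ℝ :=
  ∑ j : Fin n₁, Xvf B j (Xvf B j f) z

/-- The dilations `δ_λ(x,t) = (λ x, λ² t)` of the step-2 group. -/
def dil2 {n₁ n : ℕ} (l : ℝ) (z : (Fin n₁ → ℝ) × (Fin n → ℝ)) :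
    (Fin n₁ → ℝ) × (Fin n → ℝ) :=
  (fun i => l * z.1 i, fun k => l ^ 2 * z.2 k)

/-- A homogeneous quasi-norm on the step-2 group: continuous, nonnegative, vanishing
exactly at the origin, and `N(δ_λ(z)) = λ N(z)` for all `λ > 0`. -/
def IsHomQuasiNorm2 {n₁ n : ℕ} (N : (Fin n₁ → ℝ) × (Fin n → ℝ) → ℝ) : Prop :=
  Continuous N ∧ (∀ z, 0 ≤ N z) ∧ (∀ z, N z = 0 ↔ z = 0) ∧
    ∀ l : ℝ, 0 < l → ∀ z, N (dil2 l z) = l * N z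

/-- The probability measure `μ_p = Z⁻¹ e^{−a N(z)^p} dz` on the step-2 group. -/
noncomputable def muP {n₁ n : ℕ} (N : (Fin n₁ → ℝ) × (Fin n → ℝ) → ℝ) (a p : ℝ) :
    Measure ((Fin n₁ → ℝ) × (Fin n → ℝ)) :=
  ((∫⁻ z, ENNReal.ofReal (Real.exp (-(a * N z ^ p))))⁻¹) •
    (volume.withDensity fun z => ENNReal.ofReal (Real.exp (-(a * N z ^ p))))

/-- The Euclidean norm `‖x‖ = (Σ_i x_i²)^{1/2}` on `ℝ^m`. -/
noncomputable def eucNorm {m : ℕ} (x : Fin m → ℝ) : ℝ :=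
  Real.sqrt (∑ i, x i ^ 2)

/-- The homogeneous quasi-norm `N_α(x,t) = (‖x‖^{4α} + Σ_j c_j t_j^{2α})^{1/(4α)}`. -/
noncomputable def Nalpha {n₁ n : ℕ} (α : ℕ) (c : Fin n → ℝ)
    (z : (Fin n₁ → ℝ) × (Fin n → ℝ)) : ℝ :=
  (eucNorm z.1 ^ (4 * α) + ∑ j, c j * z.2 j ^ (2 * α)) ^ ((1 : ℝ) / (4 * α : ℝ))

/-- Proposition 4.1 of the paper: on a step-2 Carnot group, the quasi-norm `N_α` satisfies
`|∇_G N_α(z)| ≥ C ‖x‖^{4α−1}/N_α(z)^{4α−1}` for all `z = (x,t) ≠ 0`; in particular, since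
`‖x‖ ≥ |x_{j₀}|`, it satisfies Condition (G) with `γ = 4α` and any index `j₀`. -/
theorem Nalpha_gradient_lower_bound
    (n₁ n : ℕ) (hn₁ : 0 < n₁) (hn : 0 < n)
    (B : Fin n → Matrix (Fin n₁) (Fin n₁) ℝ)
    (hskew : ∀ k, (B k)ᵀ = -(B k))
    (hindep : ∀ τ : Fin n → ℝ, ∑ k, τ k • B k = 0 → τ = 0)
    (α : ℕ) (hα : 0 < α) (c : Fin n → ℝ) (hc : ∀ j, 0 < c j) :
    ∃ C : ℝ, 0 < C ∧
      (∀ z : (Fin n₁ → ℝ) × (Fin n → ℝ), z ≠ 0 →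
        C * eucNorm z.1 ^ (4 * α - 1) / Nalpha α c z ^ (4 * α - 1) ≤
          gradLen B (Nalpha α c) z) ∧
      ∀ j₀ : Fin n₁, ∀ z : (Fin n₁ → ℝ) × (Fin n → ℝ), z ≠ 0 →
        C * |z.1 j₀| ^ (4 * α - 1) / Nalpha α c z ^ (4 * α - 1) ≤
          gradLen B (Nalpha α c) z := by
  classical
  have hαR : (0:ℝ) < (α:ℝ) := by exact_mod_cast hα
  set r : ℝ := (1:ℝ) / (4 * (α:ℝ)) with hr
  have hNnonneg : ∀ z : (Fin n₁ → ℝ) × (Fin n → ℝ), 0 ≤ Nalpha α c z := by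
    intro z
    apply Real.rpow_nonneg
    apply add_nonneg
    · exact pow_nonneg (Real.sqrt_nonneg _) _
    · exact Finset.sum_nonneg fun j _ => mul_nonneg (hc j).le (by rw [pow_mul]; positivity)
  have key : ∀ z : (Fin n₁ → ℝ) × (Fin n → ℝ), z ≠ 0 →
      eucNorm z.1 ^ (4*α-1) / Nalpha α c z ^ (4*α-1) ≤ gradLen B (Nalpha α c) z := by
    intro z hz
    by_cases hx : z.1 = 0
    · have h0 : eucNorm z.1 = 0 := by simp [eucNorm, hx]
      rw [h0, zero_pow (by omega : 4*α-1 ≠ 0), zero_div]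
      exact Real.sqrt_nonneg _
    · obtain ⟨i₀, hi₀⟩ : ∃ i, z.1 i ≠ 0 := by
        by_contra h
        push_neg at h
        exact hx (funext h)
      set S : ℝ := ∑ i, z.1 i ^ 2 with hSdef
      have hS : 0 < S := Finset.sum_pos' (fun i _ => sq_nonneg _)
        ⟨i₀, Finset.mem_univ _, by positivity⟩
      set T : ℝ := ∑ j, c j * z.2 j ^ (2*α) with hTdef
      have hT : 0 ≤ T :=
        Finset.sum_nonneg fun j _ => mul_nonneg (hc j).le (by rw [pow_mul]; positivity)
      set Q : ℝ := S ^ (2*α) + T with hQdef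
      have hQ : 0 < Q := add_pos_of_pos_of_nonneg (pow_pos hS _) hT
      have hwpos : 0 < Real.sqrt S := Real.sqrt_pos.2 hS
      have hweq : eucNorm z.1 = Real.sqrt S := rfl
      have hfun : Nalpha α c = fun w : (Fin n₁ → ℝ) × (Fin n → ℝ) =>
          ((∑ i, w.1 i ^ 2) ^ (2*α) + ∑ j, c j * w.2 j ^ (2*α)) ^ r := by
        funext w
        simp only [Nalpha, eucNorm, hr]
        rw [show 4*α = 2*(2*α) from by ring, pow_mul,
          Real.sq_sqrt (Finset.sum_nonneg fun i _ => sq_nonneg _)]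
      have hNz : Nalpha α c z = Q ^ r := by rw [hfun]
      set D : ((Fin n₁ → ℝ) × (Fin n → ℝ)) →L[ℝ] ℝ :=
        ((((2*α : ℕ):ℝ) * S ^ (2*α-1)) • (∑ i : Fin n₁, (((2:ℕ):ℝ) * z.1 i ^ (2-1)) •
            ((ContinuousLinearMap.proj i).comp
              (ContinuousLinearMap.fst ℝ (Fin n₁ → ℝ) (Fin n → ℝ)))))
          + ∑ k : Fin n, c k • ((((2*α : ℕ):ℝ) * z.2 k ^ (2*α-1)) •
            ((ContinuousLinearMap.proj k).comp
              (ContinuousLinearMap.snd ℝ (Fin n₁ → ℝ) (Fin n → ℝ)))) with hDdef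
      have hD : HasFDerivAt (fun w : (Fin n₁ → ℝ) × (Fin n → ℝ) =>
          (∑ i, w.1 i ^ 2) ^ (2*α) + ∑ j, c j * w.2 j ^ (2*α)) D z := by
        refine HasFDerivAt.add ?_ ?_
        · exact (hasDerivAt_pow (2*α) S).comp_hasFDerivAt z
            (HasFDerivAt.fun_sum fun i _ =>
              (hasDerivAt_pow 2 (z.1 i)).comp_hasFDerivAt (f := fun w : (Fin n₁ → ℝ) × (Fin n → ℝ) => w.1 i) z
                ((hasFDerivAt_apply i z.1).comp (g := fun v : Fin n₁ → ℝ => v i) (f := Prod.fst) z hasFDerivAt_fst))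
        · exact HasFDerivAt.fun_sum fun k _ =>
            ((hasDerivAt_pow (2*α) (z.2 k)).comp_hasFDerivAt (f := fun w : (Fin n₁ → ℝ) × (Fin n → ℝ) => w.2 k) z
              ((hasFDerivAt_apply k z.2).comp (g := fun v : Fin n → ℝ => v k) (f := Prod.snd) z hasFDerivAt_snd)).const_mul (c k)
      have hN' : HasFDerivAt (Nalpha α c) ((r * Q ^ (r-1)) • D) z := by
        rw [hfun]
        exact hD.rpow_const (Or.inl hQ.ne')
      have hfderiv : fderiv ℝ (Nalpha α c) z = (r * Q ^ (r-1)) • D := hN'.fderiv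
      have hDx : ∀ j : Fin n₁, D (Pi.single j 1, (0 : Fin n → ℝ))
          = 4*(α:ℝ) * S^(2*α-1) * z.1 j := by
        intro j
        rw [hDdef]
        simp only [ContinuousLinearMap.add_apply, ContinuousLinearMap.coe_smul',
          ContinuousLinearMap.coe_sum', Pi.smul_apply, Finset.sum_apply,
          ContinuousLinearMap.coe_comp', Function.comp_apply, ContinuousLinearMap.coe_fst',
          ContinuousLinearMap.coe_snd', ContinuousLinearMap.proj_apply, smul_eq_mul,
          Pi.single_apply, Pi.zero_apply, mul_ite, mul_one, mul_zero,
          Finset.sum_ite_eq', Finset.mem_univ, if_true, Finset.sum_const_zero, add_zero]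
        push_cast
        ring
      have hDt : ∀ k : Fin n, D ((0 : Fin n₁ → ℝ), Pi.single k 1)
          = 2*(α:ℝ) * c k * z.2 k ^ (2*α-1) := by
        intro k
        rw [hDdef]
        simp only [ContinuousLinearMap.add_apply, ContinuousLinearMap.coe_smul',
          ContinuousLinearMap.coe_sum', Pi.smul_apply, Finset.sum_apply,
          ContinuousLinearMap.coe_comp', Function.comp_apply, ContinuousLinearMap.coe_fst',
          ContinuousLinearMap.coe_snd', ContinuousLinearMap.proj_apply, smul_eq_mul,
          Pi.single_apply, Pi.zero_apply, mul_ite, mul_one, mul_zero,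
          Finset.sum_ite_eq', Finset.mem_univ, if_true, Finset.sum_const_zero, zero_add]
        push_cast
        ring
      have hX : ∀ j : Fin n₁, Xvf B j (Nalpha α c) z
          = (r*Q^(r-1)) * (4*(α:ℝ) * S^(2*α-1)) * z.1 j
            + ∑ k, ((r*Q^(r-1)) * (1/2) * (2*(α:ℝ) * c k * z.2 k ^ (2*α-1)))
                * (∑ i, B k i j * z.1 i) := by
        intro j
        rw [Xvf, hfderiv]
        simp only [ContinuousLinearMap.coe_smul', Pi.smul_apply, smul_eq_mul, hDx j, hDt]
        rw [Finset.mul_sum]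
        congr 1
        · ring
        · exact Finset.sum_congr rfl fun k _ => by ring
      have hskew' : ∀ k, (∑ j, z.1 j * ∑ i, B k i j * z.1 i) = 0 := by
        intro k
        have hBij : ∀ i j, B k i j = -(B k j i) := by
          intro i j
          have h := congrFun (congrFun (hskew k) j) i
          simpa [Matrix.transpose_apply, Matrix.neg_apply] using h
        have e0 : (∑ j, z.1 j * ∑ i, B k i j * z.1 i)
            = ∑ j, ∑ i, B k i j * z.1 i * z.1 j := by
          refine Finset.sum_congr rfl fun j _ => ?_
          rw [Finset.mul_sum]
          exact Finset.sum_congr rfl fun i _ => by ring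
        have e1 : (∑ j, ∑ i, B k i j * z.1 i * z.1 j)
            = -∑ j, ∑ i, B k j i * z.1 i * z.1 j := by
          rw [← Finset.sum_neg_distrib]
          refine Finset.sum_congr rfl fun j _ => ?_
          rw [← Finset.sum_neg_distrib]
          refine Finset.sum_congr rfl fun i _ => ?_
          rw [hBij]
          ring
        have e2 : (∑ j, ∑ i, B k j i * z.1 i * z.1 j)
            = ∑ j, ∑ i, B k i j * z.1 i * z.1 j := by
          rw [Finset.sum_comm]
          exact Finset.sum_congr rfl fun i _ => Finset.sum_congr rfl fun j _ => by ring
        rw [e0]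
        rw [e2] at e1
        linarith
      have hsum : (∑ j, z.1 j * Xvf B j (Nalpha α c) z)
          = (r*Q^(r-1)) * (4*(α:ℝ) * S^(2*α-1)) * S := by
        have e1 : ∀ j : Fin n₁, z.1 j * Xvf B j (Nalpha α c) z
            = (r*Q^(r-1)) * (4*(α:ℝ) * S^(2*α-1)) * z.1 j ^ 2
              + ∑ k, ((r*Q^(r-1)) * (1/2) * (2*(α:ℝ) * c k * z.2 k ^ (2*α-1)))
                  * (z.1 j * ∑ i, B k i j * z.1 i) := by
          intro j
          rw [hX j, mul_add, Finset.mul_sum]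
          congr 1
          · ring
          · exact Finset.sum_congr rfl fun k _ => by ring
        rw [Finset.sum_congr rfl fun j _ => e1 j, Finset.sum_add_distrib, Finset.sum_comm]
        have e2 : ∀ k : Fin n, (∑ j, ((r*Q^(r-1)) * (1/2) * (2*(α:ℝ) * c k * z.2 k ^ (2*α-1)))
            * (z.1 j * ∑ i, B k i j * z.1 i)) = 0 := by
          intro k
          rw [← Finset.mul_sum, hskew' k, mul_zero]
        rw [Finset.sum_congr rfl fun k _ => e2 k, Finset.sum_const_zero, add_zero,
          ← Finset.mul_sum, ← hSdef]
      have hP : (∑ j, z.1 j * Xvf B j (Nalpha α c) z) = Q^(r-1) * S^(2*α) := by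
        rw [hsum]
        have hr4 : r * (4*(α:ℝ)) = 1 := by
          rw [hr]
          field_simp
        have e3 : (r*Q^(r-1)) * (4*(α:ℝ) * S^(2*α-1)) * S
            = (r * (4*(α:ℝ))) * (Q^(r-1) * (S^(2*α-1) * S)) := by ring
        rw [e3, hr4, one_mul, ← pow_succ, show 2*α-1+1 = 2*α from by omega]
      have hCS : (Q^(r-1) * S^(2*α))^2 ≤ S * gradSq B (Nalpha α c) z := by
        rw [← hP]
        have h := Finset.sum_mul_sq_le_sq_mul_sq Finset.univ (fun j => z.1 j)
          (fun j => Xvf B j (Nalpha α c) z)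
        simpa [gradSq, ← hSdef] using h
      have hQpow : 0 < Q^(r-1) := Real.rpow_pos_of_pos hQ _
      have hgradnn : 0 ≤ gradSq B (Nalpha α c) z :=
        Finset.sum_nonneg fun j _ => sq_nonneg _
      have hle : Q^(r-1) * S^(2*α) / Real.sqrt S ≤ gradLen B (Nalpha α c) z := by
        rw [gradLen, Real.le_sqrt (by positivity) hgradnn, div_pow, Real.sq_sqrt hS.le,
          div_le_iff₀ hS]
        linarith [hCS]
      have hcast : ((4*α-1 : ℕ):ℝ) = 4*(α:ℝ) - 1 := by
        have h1 : (1:ℕ) ≤ 4*α := by omega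
        push_cast [h1]
        ring
      have hrm : r * (4*(α:ℝ) - 1) = 1 - r := by
        rw [hr]
        field_simp
      have hden : (Q ^ r) ^ (4*α-1) = Q ^ ((1:ℝ) - r) := by
        rw [← Real.rpow_natCast (Q ^ r) (4*α-1), ← Real.rpow_mul hQ.le, hcast, hrm]
      have hw1 : Real.sqrt S ^ (4*α-1) * Real.sqrt S = S ^ (2*α) := by
        rw [← pow_succ, show 4*α-1+1 = 4*α from by omega,
          show 4*α = 2*(2*α) from by ring, pow_mul, Real.sq_sqrt hS.le]
      have hEq : eucNorm z.1 ^ (4*α-1) / Nalpha α c z ^ (4*α-1)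
          = Q^(r-1) * S^(2*α) / Real.sqrt S := by
        rw [hNz, hden, hweq]
        rw [div_eq_mul_inv, ← Real.rpow_neg hQ.le, neg_sub]
        rw [eq_div_iff hwpos.ne']
        rw [show Real.sqrt S ^ (4*α-1) * Q ^ (r-(1:ℝ)) * Real.sqrt S
          = Q ^ (r-(1:ℝ)) * (Real.sqrt S ^ (4*α-1) * Real.sqrt S) from by ring, hw1]
      rw [hEq]
      exact hle
  refine ⟨1, one_pos, fun z hz => by simpa using key z hz, fun j₀ z hz => ?_⟩
  have h1 : |z.1 j₀| ≤ eucNorm z.1 := by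
    rw [eucNorm, ← Real.sqrt_sq_eq_abs]
    exact Real.sqrt_le_sqrt (Finset.single_le_sum (f := fun i => z.1 i ^ 2)
      (fun i _ => sq_nonneg _) (Finset.mem_univ j₀))
  have h2 : |z.1 j₀|^(4*α-1) ≤ eucNorm z.1 ^ (4*α-1) :=
    pow_le_pow_left₀ (abs_nonneg _) h1 _
  have h3 : (0:ℝ) ≤ Nalpha α c z ^ (4*α-1) := pow_nonneg (hNnonneg z) _
  calc (1:ℝ) * |z.1 j₀|^(4*α-1) / Nalpha α c z ^ (4*α-1)
      ≤ eucNorm z.1 ^ (4*α-1) / Nalpha α c z ^ (4*α-1) := by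
        rw [one_mul]
        gcongr
    _ ≤ gradLen B (Nalpha α c) z := key z hz
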